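/- arXiv:0902.3804 — 2 statements merged into one kernel-verified Lean document; each statement's English description precedes it below -/
import Mathlib

section
/- For every 𝔭 > 0, inf{ E(v) : v ∈ Z₀(ℝ) with P(v) = 𝔭 } = 0. -/
open MeasureTheory Complex Filter
open scoped ENNReal Topology

/-- One-dimensional Ginzburg–Landau energy. -/
noncomputable def glEnergy (v : ℝ → ℂ) : ℝ≥0∞ :=
  (1 / 2) * ∫⁻ x : ℝ, ENNReal.ofReal (‖deriv v x‖ ^ 2) +
  (1 / 4) * ∫⁻ x : ℝ, ENNReal.ofReal ((1 - ‖v x‖ ^ 2) ^ 2)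

/-- `v ∈ H¹_loc(ℝ, ℂ)`. -/
def MemH1loc (v : ℝ → ℂ) : Prop :=
  Continuous v ∧
  (∀ a b : ℝ, IntegrableOn (fun x => ‖deriv v x‖ ^ 2) (Set.Icc a b)) ∧
  ∀ x : ℝ, v x = v 0 + ∫ t in (0 : ℝ)..x, deriv v t

/-- `v ∈ Z₀(ℝ)`: `v ∈ H¹_loc`, `E(v) < 2√2/3`, and `v` has limits at `±∞`. -/
def MemZ0 (v : ℝ → ℂ) : Prop :=
  MemH1loc v ∧ glEnergy v < ENNReal.ofReal (2 * Real.sqrt 2 / 3) ∧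
  (∃ L : ℂ, Tendsto v atTop (𝓝 L)) ∧ (∃ L : ℂ, Tendsto v atBot (𝓝 L))

/-- `P(v) = q` where `P(v) = p(v) - (φ(+∞) - φ(-∞))/2` is the (non-renormalized)
momentum, computed through a continuous phase lifting `φ` of `v`:
`p(v) = (1/2)∫ (1 - |v|²) φ'`, and `φ(±∞)` are the limits of `φ` at `±∞`. -/
def HasMomentumP (v : ℝ → ℂ) (q : ℝ) : Prop :=
  ∃ φ : ℝ → ℝ, Continuous φ ∧
    (∀ x : ℝ, v x = ((‖v x‖ : ℝ) : ℂ) * Complex.exp ((φ x : ℝ) * Complex.I)) ∧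
    Integrable (fun x => (1 - ‖v x‖ ^ 2) * deriv φ x) ∧
    ∃ φp φm : ℝ, Tendsto φ atTop (𝓝 φp) ∧ Tendsto φ atBot (𝓝 φm) ∧
      (1 / 2) * (∫ x : ℝ, (1 - ‖v x‖ ^ 2) * deriv φ x) - (1 / 2) * (φp - φm) = q

open Real in
lemma exists_small_energy (𝔭 : ℝ) (h𝔭 : 0 < 𝔭) (δ : ℝ) (hδ : 0 < δ)
    (hδ2 : δ ≤ Real.sqrt 2 / 3) :
    ∃ v : ℝ → ℂ, MemZ0 v ∧ HasMomentumP v 𝔭 ∧ glEnergy v ≤ ENNReal.ofReal δ := by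
  set a : ℝ := -(2 * 𝔭) / π with ha
  have ha0 : a ≠ 0 := by
    simp only [ha, div_ne_zero_iff, neg_ne_zero]
    exact ⟨by positivity, Real.pi_ne_zero⟩
  set T : ℝ := 1 + a ^ 2 * π / δ with hT
  have hT0 : 0 < T := by positivity
  set φ : ℝ → ℝ := fun x => a * Real.arctan (x / T) with hφ
  set v : ℝ → ℂ := fun x => Complex.exp ((φ x : ℂ) * Complex.I) with hv
  set D : ℝ → ℝ := fun x => a * ((1 / (1 + (x / T) ^ 2)) * (1 / T)) with hD
  have hφd : ∀ x, HasDerivAt φ (D x) x := fun x => by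
    rw [hφ, hD]; exact
    (((Real.hasDerivAt_arctan (x / T)).comp x
      ((hasDerivAt_id x).div_const T)).const_mul a)
  have hvd : ∀ x, HasDerivAt v
      (Complex.exp ((φ x : ℂ) * Complex.I) * ((D x : ℂ) * Complex.I)) x := fun x =>
    (((hφd x).ofReal_comp).mul_const Complex.I).cexp
  have hnv : ∀ x, ‖v x‖ = 1 := fun x => Complex.norm_exp_ofReal_mul_I (φ x)
  have hφcont : Continuous φ := by
    apply continuous_const.mul
    exact Real.continuous_arctan.comp (continuous_id.div_const T)
  have hvcont : Continuous v := by
    apply Complex.continuous_exp.comp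
    exact (Complex.continuous_ofReal.comp hφcont).mul continuous_const
  have hDcont : Continuous D := by
    apply Continuous.mul continuous_const
    apply Continuous.mul _ continuous_const
    apply Continuous.div continuous_const (by continuity)
    intro x; positivity
  have hvderiv : ∀ x, deriv v x = Complex.exp ((φ x : ℂ) * Complex.I) * ((D x : ℂ) * Complex.I) :=
    fun x => (hvd x).deriv
  have hdcont : Continuous (deriv v) := by
    rw [funext hvderiv]
    exact (Complex.continuous_exp.comp
      ((Complex.continuous_ofReal.comp hφcont).mul continuous_const)).mul
      ((Complex.continuous_ofReal.comp hDcont).mul continuous_const)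
  have hnderiv : ∀ x, ‖deriv v x‖ = |D x| := by
    intro x
    rw [hvderiv x]
    simp [Complex.norm_exp_ofReal_mul_I]
  -- energy bound
  set g : ℝ → ℝ := fun x => a ^ 2 / T ^ 2 * (1 + (x / T) ^ 2)⁻¹ with hg
  have hgint : Integrable g :=
    (integrable_inv_one_add_sq.comp_div hT0.ne').const_mul _
  have hgval : ∫ x : ℝ, g x = a ^ 2 * π / T := by
    rw [hg]
    simp only [integral_const_mul]
    rw [MeasureTheory.Measure.integral_comp_div (fun y : ℝ => (1 + y ^ 2)⁻¹) T,
      integral_univ_inv_one_add_sq, abs_of_pos hT0, smul_eq_mul]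
    field_simp
  have hgnonneg : ∀ x, 0 ≤ g x := by intro x; positivity
  have hbound : ∀ x, ‖deriv v x‖ ^ 2 ≤ g x := by
    intro x
    rw [hnderiv x, _root_.sq_abs, hD, hg]
    have h1 : (0:ℝ) < 1 + (x / T) ^ 2 := by positivity
    rw [div_eq_mul_inv (a^2)]
    have : (1 / (1 + (x / T) ^ 2)) ^ 2 ≤ (1 + (x/T)^2)⁻¹ := by
      rw [one_div, sq]
      calc (1 + (x/T)^2)⁻¹ * (1 + (x/T)^2)⁻¹ ≤ 1 * (1 + (x/T)^2)⁻¹ := by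
            apply mul_le_mul_of_nonneg_right _ (by positivity)
            rw [inv_le_one_iff₀]; right; nlinarith
        _ = (1 + (x/T)^2)⁻¹ := one_mul _
    calc (a * (1 / (1 + (x / T) ^ 2) * (1 / T))) ^ 2
        = a ^ 2 * (1/T)^2 * (1 / (1 + (x / T) ^ 2)) ^ 2 := by ring
      _ ≤ a ^ 2 * (1/T)^2 * (1 + (x/T)^2)⁻¹ := by
          apply mul_le_mul_of_nonneg_left this (by positivity)
      _ = a ^ 2 * (T^2)⁻¹ * (1 + (x/T)^2)⁻¹ := by rw [one_div, ← inv_pow]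
  have hklt : a ^ 2 * π / T < δ := by
    rw [div_lt_iff₀ hT0, hT]
    have : δ * (1 + a ^ 2 * π / δ) = δ + a ^ 2 * π := by field_simp
    rw [this]
    linarith
  have hkin : ∫⁻ x : ℝ, ENNReal.ofReal (‖deriv v x‖ ^ 2) ≤ ENNReal.ofReal (a ^ 2 * π / T) := by
    calc ∫⁻ x : ℝ, ENNReal.ofReal (‖deriv v x‖ ^ 2)
        ≤ ∫⁻ x : ℝ, ENNReal.ofReal (g x) :=
          lintegral_mono fun x => ENNReal.ofReal_le_ofReal (hbound x)
      _ = ENNReal.ofReal (∫ x : ℝ, g x) :=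
          (MeasureTheory.ofReal_integral_eq_lintegral_ofReal hgint
            (Filter.Eventually.of_forall hgnonneg)).symm
      _ = ENNReal.ofReal (a ^ 2 * π / T) := by rw [hgval]
  have hpot : ∫⁻ x : ℝ, ENNReal.ofReal ((1 - ‖v x‖ ^ 2) ^ 2) = 0 := by
    have : ∀ x : ℝ, ENNReal.ofReal ((1 - ‖v x‖ ^ 2) ^ 2) = 0 := by
      intro x; rw [hnv x]; norm_num
    simp only [this, lintegral_zero]
  have henergy : glEnergy v ≤ ENNReal.ofReal δ := by
    rw [glEnergy, hpot]
    simp only [mul_zero, add_zero]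
    calc (1/2 : ℝ≥0∞) * ∫⁻ x : ℝ, ENNReal.ofReal (‖deriv v x‖ ^ 2)
        ≤ 1 * ENNReal.ofReal (a ^ 2 * π / T) := by
          apply mul_le_mul' (by norm_num) hkin
      _ = ENNReal.ofReal (a ^ 2 * π / T) := one_mul _
      _ ≤ ENNReal.ofReal δ := ENNReal.ofReal_le_ofReal hklt.le
  -- limits
  have hdivtop : Tendsto (fun x : ℝ => x / T) atTop atTop := tendsto_id.atTop_div_const hT0
  have hdivbot : Tendsto (fun x : ℝ => x / T) atBot atBot := tendsto_id.atBot_div_const hT0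
  have hφtop : Tendsto φ atTop (𝓝 (a * (π / 2))) :=
    ((Real.tendsto_arctan_atTop.mono_right nhdsWithin_le_nhds).comp hdivtop).const_mul a
  have hφbot : Tendsto φ atBot (𝓝 (a * (-(π / 2)))) :=
    ((Real.tendsto_arctan_atBot.mono_right nhdsWithin_le_nhds).comp hdivbot).const_mul a
  have hvtop : Tendsto v atTop (𝓝 (Complex.exp ((a * (π / 2) : ℝ) * Complex.I))) :=
    (Complex.continuous_exp.tendsto _).comp
      (((Complex.continuous_ofReal.tendsto _).comp hφtop).mul_const Complex.I)
  have hvbot : Tendsto v atBot (𝓝 (Complex.exp ((a * (-(π / 2)) : ℝ) * Complex.I))) :=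
    (Complex.continuous_exp.tendsto _).comp
      (((Complex.continuous_ofReal.tendsto _).comp hφbot).mul_const Complex.I)
  -- H1loc
  have hH1 : MemH1loc v := by
    refine ⟨hvcont, fun p q => ?_, fun x => ?_⟩
    · exact ((hdcont.norm.pow 2).integrableOn_Icc)
    · have := intervalIntegral.integral_eq_sub_of_hasDerivAt (a := 0) (b := x)
        (fun t _ => hvd t) ((hdcont.intervalIntegrable 0 x).congr ?_)
      · rw [intervalIntegral.integral_congr (g := deriv v) (fun t _ => (hvderiv t).symm)] at this
        rw [this]; ring
      · exact fun t _ => hvderiv t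
  have hZ0 : MemZ0 v := by
    refine ⟨hH1, ?_, ⟨_, hvtop⟩, ⟨_, hvbot⟩⟩
    calc glEnergy v ≤ ENNReal.ofReal δ := henergy
      _ < ENNReal.ofReal (2 * Real.sqrt 2 / 3) := by
          apply ENNReal.ofReal_lt_ofReal_iff (by positivity) |>.mpr
          have h2 : 0 < Real.sqrt 2 := by positivity
          linarith
  have hzero : (fun x => (1 - ‖v x‖ ^ 2) * deriv φ x) = fun _ => (0:ℝ) := by
    funext x; rw [hnv x]; ring
  have hmom : HasMomentumP v 𝔭 := by
    refine ⟨φ, hφcont, fun x => ?_, ?_, a * (π / 2), a * (-(π / 2)), hφtop, hφbot, ?_⟩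
    · rw [hnv x]; push_cast; rw [one_mul]
    · rw [hzero]; exact integrable_zero _ _ _
    · rw [hzero]
      simp only [integral_zero, mul_zero, zero_sub]
      rw [ha]
      field_simp
      ring
  exact ⟨v, hZ0, hmom, henergy⟩

/-- For every `𝔭 > 0`, the infimum of the energy over `Z₀(ℝ)` maps with momentum
`P(v) = 𝔭` equals `0`. -/
theorem inf_energy_fixed_momentum_Z0 (𝔭 : ℝ) (h𝔭 : 0 < 𝔭) :
    sInf {e : ℝ≥0∞ | ∃ v : ℝ → ℂ, MemZ0 v ∧ HasMomentumP v 𝔭 ∧ e = glEnergy v} = 0 := by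
  refine le_antisymm ?_ zero_le
  refine ENNReal.le_of_forall_pos_le_add fun ε hε _ => ?_
  set δ : ℝ := min (ε : ℝ) (Real.sqrt 2 / 3) with hδdef
  have hδ0 : 0 < δ := lt_min (by exact_mod_cast hε) (by positivity)
  obtain ⟨v, hZ, hM, hE⟩ := exists_small_energy 𝔭 h𝔭 δ hδ0 (min_le_right _ _)
  calc sInf {e : ℝ≥0∞ | ∃ v : ℝ → ℂ, MemZ0 v ∧ HasMomentumP v 𝔭 ∧ e = glEnergy v}
      ≤ glEnergy v := sInf_le ⟨v, hZ, hM, rfl⟩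
    _ ≤ ENNReal.ofReal δ := hE
    _ ≤ 0 + (ε : ℝ≥0∞) := by
        rw [zero_add]
        calc ENNReal.ofReal δ ≤ ENNReal.ofReal (ε : ℝ) :=
              ENNReal.ofReal_le_ofReal (min_le_left _ _)
          _ = (ε : ℝ≥0∞) := ENNReal.ofReal_coe_nnreal
end

section
/- Let 𝔮 ∈ ℝ with 0 < |𝔮| ≤ 1/32 and let μ ∈ ℝ with 0 < μ ≤ 1/4. Then there exist a real number ℓ > 1 and functions ρ, ψ : [0, ℓ] → ℝ of class H¹ with ρ > 0 such that, setting w = ρ·exp(iψ) : [0, ℓ] → ℂ, one has: w(0) = w(ℓ); 0 < |1 − |w(0)|| ≤ μ; 𝔮 = (1/2)∫₀^ℓ (1 − ρ(x)²)·ψ'(x) dx; and (1/2)∫₀^ℓ |w'(x)|² dx + (1/4)∫₀^ℓ (1 − |w(x)|²)² dx ≤ 14·|𝔮|. -/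
open MeasureTheory Complex

set_option maxHeartbeats 1000000 in
/-- Construction of a small loop carrying a prescribed amount of momentum:
for `0 < |𝔮| ≤ 1/32` and `0 < μ ≤ 1/4`, there exist `ℓ > 1` and an `H¹` map
`w = ρ exp(iψ)` on `[0, ℓ]` with `w(0) = w(ℓ)`, `0 < |1 - |w(0)|| ≤ μ`,
`𝔮 = (1/2)∫₀^ℓ (1 - ρ²) ψ'`, and Ginzburg–Landau energy at most `14 |𝔮|`. -/
theorem momentum_loop_construction (𝔮 μ : ℝ) (h𝔮0 : 0 < |𝔮|) (h𝔮 : |𝔮| ≤ 1 / 32)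
    (hμ0 : 0 < μ) (hμ : μ ≤ 1 / 4) :
    ∃ ℓ : ℝ, 1 < ℓ ∧ ∃ ρ ψ : ℝ → ℝ,
      ContinuousOn ρ (Set.Icc 0 ℓ) ∧ ContinuousOn ψ (Set.Icc 0 ℓ) ∧
      (∀ x ∈ Set.Icc (0 : ℝ) ℓ, 0 < ρ x) ∧
      IntegrableOn (fun x => (deriv ρ x) ^ 2 + (deriv ψ x) ^ 2) (Set.Icc 0 ℓ) ∧
      (∀ x ∈ Set.Icc (0 : ℝ) ℓ, ρ x = ρ 0 + ∫ t in (0 : ℝ)..x, deriv ρ t) ∧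
      (∀ x ∈ Set.Icc (0 : ℝ) ℓ, ψ x = ψ 0 + ∫ t in (0 : ℝ)..x, deriv ψ t) ∧
      (fun x : ℝ => ((ρ x : ℝ) : ℂ) * Complex.exp ((ψ x : ℝ) * Complex.I)) 0
        = (fun x : ℝ => ((ρ x : ℝ) : ℂ) * Complex.exp ((ψ x : ℝ) * Complex.I)) ℓ ∧
      0 < |1 - ‖((ρ 0 : ℝ) : ℂ) * Complex.exp ((ψ 0 : ℝ) * Complex.I)‖| ∧
      |1 - ‖((ρ 0 : ℝ) : ℂ) * Complex.exp ((ψ 0 : ℝ) * Complex.I)‖| ≤ μ ∧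
      𝔮 = (1 / 2) * ∫ x in (0 : ℝ)..ℓ, (1 - ρ x ^ 2) * deriv ψ x ∧
      (1 / 2) * (∫ x in (0 : ℝ)..ℓ,
          ‖deriv (fun y : ℝ => ((ρ y : ℝ) : ℂ) * Complex.exp ((ψ y : ℝ) * Complex.I)) x‖ ^ 2)
        + (1 / 4) * (∫ x in (0 : ℝ)..ℓ,
          (1 - ‖((ρ x : ℝ) : ℂ) * Complex.exp ((ψ x : ℝ) * Complex.I)‖ ^ 2) ^ 2)
        ≤ 14 * |𝔮| := by
  have hπ : (3:ℝ) < Real.pi := Real.pi_gt_three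
  set k : ℕ := ⌈1/μ⌉₊ with hkdef
  have hk1 : (1:ℝ)/μ ≤ (k:ℝ) := Nat.le_ceil _
  have hk4 : (4:ℝ) ≤ (k:ℝ) := le_trans (by rw [le_div_iff₀ hμ0]; linarith) hk1
  have hkpos : (0:ℝ) < (k:ℝ) := by linarith
  set n : ℤ := if 0 < 𝔮 then (k:ℤ) else -(k:ℤ) with hndef
  have hn2 : ((n:ℝ))^2 = (k:ℝ)^2 := by
    rcases ite_eq_or_eq (0 < 𝔮) ((k:ℤ)) (-(k:ℤ)) with h | h <;> rw [hndef, h] <;> push_cast <;> ring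
  have hnq : (n:ℝ) * |𝔮| = (k:ℝ) * 𝔮 := by
    rcases lt_trichotomy 𝔮 0 with h | h | h
    · rw [hndef, if_neg (by linarith), abs_of_neg h]; push_cast; ring
    · exfalso; rw [h] at h𝔮0; simp at h𝔮0
    · rw [hndef, if_pos h, abs_of_pos h]; push_cast; ring
  set ℓ : ℝ := 2 * Real.pi^2 * (k:ℝ)^2 / |𝔮| with hℓdef
  have hπ2 : (9:ℝ) ≤ Real.pi^2 := by nlinarith
  have hk2 : (16:ℝ) ≤ (k:ℝ)^2 := by nlinarith
  have hℓ1 : 1 < ℓ := by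
    rw [hℓdef, lt_div_iff₀ h𝔮0]; nlinarith
  have hℓ0 : (0:ℝ) < ℓ := by linarith
  have hℓne : ℓ ≠ 0 := ne_of_gt hℓ0
  have hπ0 : Real.pi ≠ 0 := by positivity
  have hkne : (k:ℝ) ≠ 0 := ne_of_gt hkpos
  set t : ℝ := |𝔮| / (Real.pi * (k:ℝ)) with htdef
  have ht0 : 0 < t := by positivity
  have htμ : t ≤ μ := by
    have h1 : (1:ℝ) ≤ (k:ℝ) * μ := (div_le_iff₀ hμ0).mp hk1
    rw [htdef, div_le_iff₀ (by positivity)]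
    nlinarith
  have ht1 : t < 1 := by linarith
  set r : ℝ := Real.sqrt (1 - t) with hrdef
  have hr2 : r^2 = 1 - t := Real.sq_sqrt (by linarith)
  have hr0 : 0 < r := Real.sqrt_pos.mpr (by linarith)
  have hr1 : r < 1 := by nlinarith
  set a : ℝ := 2 * Real.pi * (n:ℝ) / ℓ with hadef
  have haℓ : a * ℓ = 2 * Real.pi * (n:ℝ) := by rw [hadef, div_mul_cancel₀ _ hℓne]
  have hd2 : deriv (fun x : ℝ => a * x) = fun _ => a := by
    funext x; simpa using ((hasDerivAt_id x).const_mul a).deriv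
  have hnorm1 : ∀ x : ℝ, ‖((r : ℝ) : ℂ) * Complex.exp (((a * x : ℝ) : ℂ) * Complex.I)‖ = r := by
    intro x
    rw [norm_mul, Complex.norm_exp_ofReal_mul_I, Complex.norm_real, Real.norm_eq_abs,
      abs_of_pos hr0, mul_one]
  refine ⟨ℓ, hℓ1, fun _ => r, fun x => a * x, continuousOn_const,
    (continuous_const.mul continuous_id).continuousOn, fun x _ => hr0, ?_, ?_, ?_, ?_, ?_, ?_, ?_, ?_⟩
  · -- integrability
    have hd1 : deriv (fun _ : ℝ => r) = fun _ => (0:ℝ) := by funext x; simp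
    rw [hd1, hd2]
    exact integrableOn_const measure_Icc_lt_top.ne
  · intro x _
    simp
  · intro x _
    beta_reduce
    rw [hd2, intervalIntegral.integral_const, smul_eq_mul, sub_zero, mul_zero, zero_add, mul_comm]
  · -- closure
    beta_reduce
    have h1 : (((a * ℓ : ℝ)) : ℂ) * Complex.I = (n:ℤ) * (2 * (Real.pi : ℂ) * Complex.I) := by
      rw [haℓ]; push_cast; ring
    rw [mul_zero, h1, Complex.exp_int_mul_two_pi_mul_I]
    norm_num
  · -- 0 < |1 - ‖w 0‖|
    beta_reduce
    rw [hnorm1 0, abs_of_pos (by linarith)]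
    linarith
  · beta_reduce
    rw [hnorm1 0, abs_of_pos (by linarith)]
    nlinarith
  · -- momentum
    beta_reduce
    rw [hd2]
    rw [intervalIntegral.integral_const, smul_eq_mul, sub_zero]
    have key : ℓ * ((1 - r ^ 2) * a) = 2 * 𝔮 := by
      rw [hr2, hadef, htdef]
      have hq : |𝔮| ≠ 0 := ne_of_gt h𝔮0
      rw [sub_sub_cancel]
      calc ℓ * (|𝔮| / (Real.pi * (k:ℝ)) * (2 * Real.pi * (n:ℝ) / ℓ))
          = 2 * ((n:ℝ) * |𝔮|) / (k:ℝ) := by field_simp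
        _ = 2 * 𝔮 := by rw [hnq]; field_simp
    rw [key]; ring
  · -- energy
    beta_reduce
    have hW : ∀ x : ℝ, HasDerivAt
        (fun y : ℝ => ((r : ℝ) : ℂ) * Complex.exp (((a * y : ℝ) : ℂ) * Complex.I))
        ((r:ℂ) * (Complex.exp (((a * x : ℝ) : ℂ) * Complex.I) * ((a:ℂ) * Complex.I))) x := by
      intro x
      have h2 : HasDerivAt (fun y : ℝ => ((y : ℝ) : ℂ)) 1 x := Complex.ofRealCLM.hasDerivAt
      have h3 := h2.const_mul ((a:ℂ) * Complex.I)
      have heq : (fun y : ℝ => ((a:ℂ) * Complex.I) * ((y : ℝ) : ℂ)) =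
          fun y : ℝ => (((a * y : ℝ)) : ℂ) * Complex.I := by
        funext y; push_cast; ring
      rw [heq] at h3
      have h1 : HasDerivAt (fun y : ℝ => (((a * y : ℝ)) : ℂ) * Complex.I)
          ((a:ℂ) * Complex.I) x := by simpa using h3
      exact (h1.cexp).const_mul _
    have hnd : deriv (fun y : ℝ => ((r : ℝ) : ℂ) * Complex.exp (((a * y : ℝ) : ℂ) * Complex.I)) =
        fun x => (r:ℂ) * (Complex.exp (((a * x : ℝ) : ℂ) * Complex.I) * ((a:ℂ) * Complex.I)) := by
      funext x; exact (hW x).deriv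
    rw [hnd]
    have hnorm : ∀ x : ℝ,
        ‖(r:ℂ) * (Complex.exp (((a * x : ℝ) : ℂ) * Complex.I) * ((a:ℂ) * Complex.I))‖ ^ 2
        = r ^ 2 * a ^ 2 := by
      intro x
      rw [norm_mul, norm_mul, norm_mul, Complex.norm_exp_ofReal_mul_I, Complex.norm_I,
        Complex.norm_real, Complex.norm_real, Real.norm_eq_abs, Real.norm_eq_abs,
        abs_of_pos hr0, mul_one, one_mul, mul_pow, _root_.sq_abs]
    have hint1 : (∫ x in (0:ℝ)..ℓ,
        ‖(r:ℂ) * (Complex.exp (((a * x : ℝ) : ℂ) * Complex.I) * ((a:ℂ) * Complex.I))‖ ^ 2)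
        = ℓ * (r ^ 2 * a ^ 2) := by
      rw [intervalIntegral.integral_congr (g := fun _ => r ^ 2 * a ^ 2) (fun x _ => hnorm x),
        intervalIntegral.integral_const, smul_eq_mul, sub_zero]
    have hint2 : (∫ x in (0:ℝ)..ℓ,
        (1 - ‖((r : ℝ) : ℂ) * Complex.exp (((a * x : ℝ) : ℂ) * Complex.I)‖ ^ 2) ^ 2)
        = ℓ * t ^ 2 := by
      rw [intervalIntegral.integral_congr (g := fun _ => t ^ 2)
        (fun x _ => by rw [hnorm1 x, hr2]; ring),
        intervalIntegral.integral_const, smul_eq_mul, sub_zero]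
    rw [hint1, hint2]
    have ha2 : a ^ 2 = 4 * Real.pi ^ 2 * (k:ℝ) ^ 2 / ℓ ^ 2 := by
      rw [hadef, div_pow, mul_pow, mul_pow, hn2]; ring
    have hl2 : 4 * Real.pi ^ 2 * (k:ℝ) ^ 2 = 2 * |𝔮| * ℓ := by
      rw [hℓdef]; field_simp; ring
    have e1 : ℓ * (r ^ 2 * a ^ 2) = 2 * |𝔮| * r ^ 2 := by
      rw [ha2, hl2]
      field_simp
    have e2 : ℓ * t ^ 2 = 2 * |𝔮| := by
      rw [hℓdef, htdef]
      field_simp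
    have hr2le : r ^ 2 ≤ 1 := by rw [hr2]; linarith
    have hfin : |𝔮| * r ^ 2 ≤ |𝔮| * 1 := mul_le_mul_of_nonneg_left hr2le (abs_nonneg 𝔮)
    linarith [e1, e2, hfin]
end
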